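/- Let q be an odd prime power with q > 5. Then there exist nonzero elements α, β ∈ F_q such that α, β and α+β are nonzero squares in F_q and the polynomial F(X) = X^{q−1} + 2·((α−β)/(α+β))·X^{(q−1)/2} + 1 ∈ F_q[X] is squarefree of degree q−1 and satisfies: F(x) is a nonzero square in F_q for every x ∈ F_q. (Thus y² = F(x) is a smooth F_q-maximal hyperelliptic curve of genus (q−3)/2 over F_q.) -/

import Mathlib

open Polynomial

theorem stmt_16 (K : Type*) [Field K] [Fintype K]
    (q : ℕ) (hq : Fintype.card K = q) (hodd : Odd q) (h5 : 5 < q) :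
    ∃ α β : K, α ≠ 0 ∧ β ≠ 0 ∧ α + β ≠ 0 ∧
      (∃ a : K, α = a ^ 2) ∧ (∃ b : K, β = b ^ 2) ∧ (∃ c : K, α + β = c ^ 2) ∧
      Squarefree ((X : Polynomial K) ^ (q - 1)
          + C (2 * ((α - β) / (α + β))) * X ^ ((q - 1) / 2) + 1) ∧
      ((X : Polynomial K) ^ (q - 1)
          + C (2 * ((α - β) / (α + β))) * X ^ ((q - 1) / 2) + 1).natDegree = q - 1 ∧
      ∀ x : K, ∃ y : K, y ≠ 0 ∧
        ((X : Polynomial K) ^ (q - 1)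
            + C (2 * ((α - β) / (α + β))) * X ^ ((q - 1) / 2) + 1).eval x = y ^ 2 := by
  classical
  have hq0 : (q : K) = 0 := by rw [← hq]; exact FiniteField.cast_card_eq_zero K
  obtain ⟨k, hk⟩ := hodd
  obtain ⟨n, rfl⟩ : ∃ n, k = n + 1 := ⟨k - 1, by omega⟩
  have hqn : q = 2 * n + 3 := by omega
  have h2 : (2 : K) ≠ 0 := by
    intro h2
    have h1 : (q : K) = 1 := by rw [hqn]; push_cast; linear_combination ((n : K) + 1) * h2
    rw [hq0] at h1; exact zero_ne_one h1
  -- find u with u^5 ≠ u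
  obtain ⟨u, hu⟩ : ∃ u : K, u ^ 5 - u ≠ 0 := by
    by_contra h
    push_neg at h
    have hp : (X ^ 5 - X : Polynomial K) ≠ 0 := by
      intro h0
      have := congrArg (fun p => Polynomial.coeff p 5) h0
      simp [Polynomial.coeff_X] at this
    have hsub : (Finset.univ : Finset K) ⊆ (X ^ 5 - X : Polynomial K).roots.toFinset := by
      intro x _
      simp only [Multiset.mem_toFinset, Polynomial.mem_roots hp, Polynomial.IsRoot]
      simp [h x]
    have h1 := Finset.card_le_card hsub
    have h2' := (X ^ 5 - X : Polynomial K).roots.toFinset_card_le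
    have h3' := Polynomial.card_roots' (X ^ 5 - X : Polynomial K)
    have hdeg : (X ^ 5 - X : Polynomial K).natDegree = 5 := by compute_degree!
    rw [hdeg] at h3'
    rw [Finset.card_univ, hq] at h1
    omega
  have hu0 : u ≠ 0 := by intro h; apply hu; rw [h]; ring
  have hu1 : u ^ 2 - 1 ≠ 0 := by
    intro h; apply hu
    have h' : u ^ 5 - u = u * (u ^ 2 - 1) * (u ^ 2 + 1) := by ring
    rw [h', h]; ring
  have hui : u ^ 2 + 1 ≠ 0 := by
    intro h; apply hu
    have h' : u ^ 5 - u = u * (u ^ 2 - 1) * (u ^ 2 + 1) := by ring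
    rw [h', h]; ring
  have h1u : (1 : K) - u ^ 2 ≠ 0 := fun h => hu1 (by linear_combination -h)
  have habv : ((1 - u ^ 2) / (u ^ 2 + 1)) ^ 2 + ((2 * u) / (u ^ 2 + 1)) ^ 2 = 1 := by
    rw [div_pow, div_pow, ← add_div, div_eq_one_iff_eq (pow_ne_zero 2 hui)]
    ring
  obtain ⟨a, b, ha, hb, hab⟩ : ∃ a b : K, a ≠ 0 ∧ b ≠ 0 ∧ a ^ 2 + b ^ 2 = 1 :=
    ⟨_, _, div_ne_zero h1u hui, div_ne_zero (mul_ne_zero h2 hu0) hui, habv⟩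
  have he1 : q - 1 = 2 * n + 2 := by omega
  have he2 : (q - 1) / 2 = n + 1 := by omega
  refine ⟨a ^ 2, b ^ 2, pow_ne_zero 2 ha, pow_ne_zero 2 hb, by rw [hab]; exact one_ne_zero,
    ⟨a, rfl⟩, ⟨b, rfl⟩, ⟨1, by rw [hab]; ring⟩, ?_⟩
  rw [hab, div_one, he2, he1]
  obtain ⟨t, ht⟩ : ∃ t : K, t = a ^ 2 - b ^ 2 := ⟨_, rfl⟩
  rw [← ht]
  have hct0 : (1 : K) - t ^ 2 = (2 * a ^ 2) * (2 * b ^ 2) := by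
    rw [ht]; linear_combination (-(1 + a ^ 2 + b ^ 2)) * hab
  have hct : (1 : K) - t ^ 2 ≠ 0 := by
    rw [hct0]
    exact mul_ne_zero (mul_ne_zero h2 (pow_ne_zero 2 ha)) (mul_ne_zero h2 (pow_ne_zero 2 hb))
  -- cast facts
  have hcast : (2 : K) * ((n : K) + 1) + 1 = 0 := by
    have h0 := hq0
    rw [hqn] at h0
    push_cast at h0
    linear_combination h0
  have hm1 : ((2 * n + 2 : ℕ) : K) = -1 := by push_cast; linear_combination hcast
  have hm2 : (2 * t) * ((n + 1 : ℕ) : K) = -t := by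
    push_cast; linear_combination t * hcast
  set P : Polynomial K := X ^ (2 * n + 2) + C (2 * t) * X ^ (n + 1) + 1 with hP
  -- derivative
  have hder : P.derivative = -(X ^ n * (X ^ (n + 1) + C t)) := by
    rw [hP, derivative_add, derivative_add, derivative_one, derivative_X_pow,
      derivative_C_mul, derivative_X_pow,
      show 2 * n + 2 - 1 = 2 * n + 1 from by omega,
      show n + 1 - 1 = n from by omega, hm1, ← mul_assoc, ← C_mul, hm2]
    simp only [map_neg, map_one]
    ring
  -- Bezout identity
  have hid : X ^ n * P + (X ^ (n + 1) + C t) * P.derivative = C (1 - t ^ 2) * X ^ n := by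
    rw [hder, hP]
    simp only [map_sub, map_one, map_pow, map_mul, map_ofNat]
    ring
  have hcopX : IsCoprime P (X : Polynomial K) := by
    refine ⟨1, -(X ^ (2 * n + 1) + C (2 * t) * X ^ n), ?_⟩
    rw [hP]; ring
  obtain ⟨U, V, hUV⟩ := hcopX.pow_right (n := n)
  have hsep : P.Separable := by
    refine ⟨U + V * C (1 - t ^ 2)⁻¹ * X ^ n, V * C (1 - t ^ 2)⁻¹ * (X ^ (n + 1) + C t), ?_⟩
    calc (U + V * C (1 - t ^ 2)⁻¹ * X ^ n) * P
        + V * C (1 - t ^ 2)⁻¹ * (X ^ (n + 1) + C t) * P.derivative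
        = U * P + V * C (1 - t ^ 2)⁻¹
            * (X ^ n * P + (X ^ (n + 1) + C t) * P.derivative) := by ring
      _ = U * P + V * C (1 - t ^ 2)⁻¹ * (C (1 - t ^ 2) * X ^ n) := by rw [hid]
      _ = U * P + V * X ^ n := by
            rw [show V * C (1 - t ^ 2)⁻¹ * (C (1 - t ^ 2) * X ^ n)
              = V * (C (1 - t ^ 2)⁻¹ * C (1 - t ^ 2)) * X ^ n from by ring,
              ← C_mul, inv_mul_cancel₀ hct, C_1]; ring
      _ = 1 := hUV
  refine ⟨hsep.squarefree, ?_, ?_⟩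
  · rw [hP]
    compute_degree
    all_goals first
      | omega
      | (rw [if_neg (by omega : ¬(2 * n + 2 = n + 1))]; norm_num)
  · intro x
    by_cases hx : x = 0
    · refine ⟨1, one_ne_zero, ?_⟩
      rw [hP, hx]
      simp [zero_pow]
    · have hx1 : x ^ (2 * n + 2) = 1 := by
        have h' := FiniteField.pow_card_sub_one_eq_one x hx
        rwa [hq, he1] at h'
      have hss : x ^ (n + 1) * x ^ (n + 1) = 1 := by
        rw [← pow_add, show n + 1 + (n + 1) = 2 * n + 2 from by omega]; exact hx1
      have heval : P.eval x = 1 + 2 * t * x ^ (n + 1) + 1 := by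
        rw [hP]
        simp only [eval_add, eval_mul, eval_pow, eval_C, eval_X, eval_one, hx1]
      rcases mul_self_eq_one_iff.mp hss with hs | hs
      · refine ⟨2 * a, mul_ne_zero h2 ha, ?_⟩
        rw [heval, hs, ht]
        linear_combination (-2 : K) * hab
      · refine ⟨2 * b, mul_ne_zero h2 hb, ?_⟩
        rw [heval, hs, ht]
        linear_combination (-2 : K) * hab
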